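/- Let H be a complex Hilbert space and let M be a von Neumann algebra acting on H. Let Q : M → M be a ℂ-linear map which is continuous for the weak operator topology, unital (Q(1) = 1), positive (0 ≤ x implies 0 ≤ Q(x)), faithful (0 ≤ x and Q(x) = 0 imply x = 0), and a projection (Q ∘ Q = Q). Then Q(x ∘ Q(y)) = Q(x) ∘ Q(y) for all x, y ∈ M, and the range of Q is closed under the star operation and under the Jordan product ∘. -/

import Mathlib

open scoped InnerProductSpace
open RCLike ContinuousLinearMap

section Helpers

set_option linter.unusedSectionVars false
variable {H : Type*} [NormedAddCommGroup H] [InnerProductSpace ℂ H] [CompleteSpace H]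

lemma aux_re_smul (c : ℝ) (W : H →L[ℂ] H) (ξ : H) :
    re ⟪((c : ℂ) • W) ξ, ξ⟫_ℂ = c * re ⟪W ξ, ξ⟫_ℂ := by
  rw [ContinuousLinearMap.smul_apply, inner_smul_left]
  simp [RCLike.conj_ofReal, RCLike.re_ofReal_mul]

lemma aux_re_add (U V : H →L[ℂ] H) (ξ : H) :
    re ⟪(U + V) ξ, ξ⟫_ℂ = re ⟪U ξ, ξ⟫_ℂ + re ⟪V ξ, ξ⟫_ℂ := by
  rw [ContinuousLinearMap.add_apply, inner_add_left, map_add]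

lemma aux_re_sub (U V : H →L[ℂ] H) (ξ : H) :
    re ⟪(U - V) ξ, ξ⟫_ℂ = re ⟪U ξ, ξ⟫_ℂ - re ⟪V ξ, ξ⟫_ℂ := by
  rw [ContinuousLinearMap.sub_apply, inner_sub_left, map_sub]

lemma aux_abs_re_inner_le (T : H →L[ℂ] H) (ξ : H) :
    |re ⟪T ξ, ξ⟫_ℂ| ≤ ‖T‖ * ‖ξ‖ ^ 2 := by
  calc |re ⟪T ξ, ξ⟫_ℂ| ≤ ‖(⟪T ξ, ξ⟫_ℂ : ℂ)‖ := abs_re_le_norm _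
    _ ≤ ‖T ξ‖ * ‖ξ‖ := norm_inner_le_norm _ _
    _ ≤ ‖T‖ * ‖ξ‖ * ‖ξ‖ := by
        have := T.le_opNorm ξ
        exact mul_le_mul_of_nonneg_right this (norm_nonneg _)
    _ = ‖T‖ * ‖ξ‖ ^ 2 := by ring

lemma aux_inner_le {T T' : H →L[ℂ] H} (h : T ≤ T') (ξ : H) :
    re ⟪T ξ, ξ⟫_ℂ ≤ re ⟪T' ξ, ξ⟫_ℂ := by
  have h0 := ((ContinuousLinearMap.le_def T T').mp h).inner_nonneg_left ξ
  rw [ContinuousLinearMap.sub_apply, inner_sub_left] at h0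
  have h1 := (Complex.le_def.mp h0).1
  simp only [Complex.zero_re, Complex.sub_re] at h1
  show (⟪T ξ, ξ⟫_ℂ).re ≤ (⟪T' ξ, ξ⟫_ℂ).re
  linarith

lemma aux_le_of_forall_inner {T T' : H →L[ℂ] H} (hT : IsSelfAdjoint T) (hT' : IsSelfAdjoint T')
    (h : ∀ ξ, re ⟪T ξ, ξ⟫_ℂ ≤ re ⟪T' ξ, ξ⟫_ℂ) : T ≤ T' := by
  rw [ContinuousLinearMap.le_def]
  refine ⟨ContinuousLinearMap.isSelfAdjoint_iff_isSymmetric.mp (hT'.sub hT), fun ξ => ?_⟩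
  rw [ContinuousLinearMap.reApplyInnerSelf_apply, ContinuousLinearMap.sub_apply,
    inner_sub_left, map_sub]
  have := h ξ
  linarith

lemma aux_isPositive_of_forall {T : H →L[ℂ] H} (hT : IsSelfAdjoint T)
    (h : ∀ ξ, 0 ≤ re ⟪T ξ, ξ⟫_ℂ) : 0 ≤ T := by
  refine aux_le_of_forall_inner ((IsSelfAdjoint.zero _)) hT fun ξ => ?_
  simpa using h ξ

lemma aux_smul_nonneg (r : ℝ) (hr : 0 ≤ r) {W : H →L[ℂ] H} (hW : 0 ≤ W) :
    0 ≤ (r : ℂ) • W := by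
  have hWsa : IsSelfAdjoint W := .of_nonneg hW
  refine aux_isPositive_of_forall ?_ fun ξ => ?_
  · have : star ((r : ℂ) • W) = (r : ℂ) • W := by
      rw [star_smul, hWsa.star_eq]
      norm_num
    exact this
  · rw [aux_re_smul]
    exact mul_nonneg hr (by simpa using aux_inner_le hW ξ)

end Helpers

section Helpers2
set_option linter.unusedSectionVars false
variable {H : Type*} [NormedAddCommGroup H] [InnerProductSpace ℂ H] [CompleteSpace H]

lemma aux_re_smulR (c : ℝ) (W : H →L[ℂ] H) (ξ : H) :
    re ⟪(c • W) ξ, ξ⟫_ℂ = c * re ⟪W ξ, ξ⟫_ℂ := by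
  rw [← Complex.coe_smul]
  exact aux_re_smul c W ξ

end Helpers2

open scoped InnerProductSpace

section AuxOrder

variable {H : Type*} [NormedAddCommGroup H] [InnerProductSpace ℂ H] [CompleteSpace H]

/-- If `q i ≥ 0` sum to `1`, then `(∑ λᵢ • qᵢ)² ≤ ∑ λᵢ² • qᵢ`. -/
lemma aux_sum_sq_le (n : ℕ) (q : ℕ → (H →L[ℂ] H)) (lam : ℕ → ℝ)
    (hq : ∀ i ∈ Finset.range n, 0 ≤ q i)
    (hsum : (∑ i ∈ Finset.range n, q i) = 1) :
    (∑ i ∈ Finset.range n, lam i • q i) * (∑ i ∈ Finset.range n, lam i • q i) ≤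
      ∑ i ∈ Finset.range n, (lam i) ^ 2 • q i := by
  set s := ∑ i ∈ Finset.range n, lam i • q i with hs
  have hqsa : ∀ i ∈ Finset.range n, IsSelfAdjoint (q i) := fun i hi => .of_nonneg (hq i hi)
  have hssa : IsSelfAdjoint s := by
    rw [IsSelfAdjoint, hs, star_sum]
    exact Finset.sum_congr rfl fun i hi => by
      rw [star_smul, star_trivial, (hqsa i hi).star_eq]
  have key : ∀ i ∈ Finset.range n,
      star (lam i • 1 - s) * q i * (lam i • 1 - s)
        = (lam i) ^ 2 • q i - lam i • (q i * s) - lam i • (s * q i) + s * (q i * s) := by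
    intro i hi
    have hstar : star (lam i • (1 : H →L[ℂ] H) - s) = lam i • 1 - s := by
      rw [star_sub, star_smul, star_one, hssa.star_eq, star_trivial]
    rw [hstar]
    simp only [sub_mul, mul_sub, smul_mul_assoc, mul_smul_comm, one_mul, mul_one, mul_assoc]
    module
  have sum_eq : (∑ i ∈ Finset.range n, star (lam i • 1 - s) * q i * (lam i • 1 - s))
      = (∑ i ∈ Finset.range n, (lam i) ^ 2 • q i) - s * s := by
    rw [Finset.sum_congr rfl key]
    rw [Finset.sum_add_distrib, Finset.sum_sub_distrib, Finset.sum_sub_distrib]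
    have h1 : (∑ i ∈ Finset.range n, lam i • (q i * s)) = s * s := by
      simp only [← smul_mul_assoc]
      rw [← Finset.sum_mul]
    have h2 : (∑ i ∈ Finset.range n, lam i • (s * q i)) = s * s := by
      simp only [← mul_smul_comm]
      rw [← Finset.mul_sum]
    have h3 : (∑ i ∈ Finset.range n, s * (q i * s)) = s * s := by
      simp only [← mul_assoc]
      rw [← Finset.sum_mul, ← Finset.mul_sum, hsum, mul_one]
    rw [h1, h2, h3]
    abel
  have hnn : 0 ≤ (∑ i ∈ Finset.range n, (lam i) ^ 2 • q i) - s * s := by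
    rw [← sum_eq]
    exact Finset.sum_nonneg fun i hi => star_left_conjugate_nonneg (hq i hi) _
  exact sub_nonneg.mp hnn

/-- positivity of `T^k * (1-T)^m` for `0 ≤ T ≤ 1`. -/
lemma aux_pow_mul_nonneg (T : H →L[ℂ] H) (h0 : 0 ≤ T) (h1 : T ≤ 1) (k m : ℕ) :
    0 ≤ T ^ k * (1 - T) ^ m := by
  have hsa : IsSelfAdjoint T := .of_nonneg h0
  have hspec0 : ∀ x ∈ spectrum ℝ T, 0 ≤ x := fun x hx => spectrum_nonneg_of_nonneg h0 hx
  have honesub : cfc (fun x : ℝ => 1 - x) T = 1 - T := by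
    have h := cfc_sub (fun _ : ℝ => (1:ℝ)) (fun x : ℝ => x) T
    rw [cfc_const_one ℝ T, cfc_id' ℝ T] at h
    exact h
  have hspec1 : ∀ x ∈ spectrum ℝ T, x ≤ 1 := by
    intro x hx
    have h1T : (0:H →L[ℂ] H) ≤ 1 - T := sub_nonneg.mpr h1
    have hmem : 1 - x ∈ spectrum ℝ (1 - T) := by
      rw [← honesub]
      rw [cfc_map_spectrum (fun x : ℝ => 1 - x) T]
      exact ⟨x, hx, rfl⟩
    linarith [spectrum_nonneg_of_nonneg h1T hmem]
  have hcfc : cfc (fun x : ℝ => x ^ k * (1 - x) ^ m) T = T ^ k * (1 - T) ^ m := by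
    rw [cfc_mul (fun x : ℝ => x ^ k) (fun x : ℝ => (1 - x) ^ m) T]
    rw [cfc_pow_id T k]
    rw [cfc_pow (fun x : ℝ => 1 - x) m T, honesub]
  rw [← hcfc]
  exact cfc_nonneg fun x hx => mul_nonneg (pow_nonneg (hspec0 x hx) _)
    (pow_nonneg (by linarith [hspec1 x hx]) _)

end AuxOrder
set_option maxHeartbeats 1000000
set_option synthInstance.maxHeartbeats 80000

section Core

variable {H : Type*} [NormedAddCommGroup H] [InnerProductSpace ℂ H] [CompleteSpace H]
variable (S : StarSubalgebra ℂ (H →L[ℂ] H)) (Q : S →ₗ[ℂ] S)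

/-- A unital positive map on a star subalgebra preserves selfadjointness. -/
lemma lemQsa (hunital : Q 1 = 1)
    (hpos' : ∀ x : S, 0 ≤ (x : H →L[ℂ] H) → 0 ≤ ((Q x : S) : H →L[ℂ] H)) :
    ∀ x : S, star x = x → star (Q x) = Q x := by
  intro x hx
  set T : H →L[ℂ] H := (x : H →L[ℂ] H) with hT
  have hTsa : IsSelfAdjoint T := by
    have := congrArg (fun z : S => (z : H →L[ℂ] H)) hx
    exact (show star (x : H →L[ℂ] H) = x by simpa using this)
  set c : ℝ := ‖T‖ with hc
  -- `x + c • 1` is nonneg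
  have hu : 0 ≤ T + (c : ℂ) • 1 := by
    refine aux_isPositive_of_forall ?_ fun ξ => ?_
    · have : star (T + (c : ℂ) • 1) = T + (c : ℂ) • 1 := by
        rw [star_add, hTsa.star_eq, star_smul, star_one]
        norm_num
      exact this
    · rw [aux_re_add, aux_re_smul]
      have h1 := aux_abs_re_inner_le T ξ
      have h2 : re ⟪(1 : H →L[ℂ] H) ξ, ξ⟫_ℂ = ‖ξ‖ ^ 2 := by
        simp [ContinuousLinearMap.one_apply, inner_self_eq_norm_sq]; norm_cast
      rw [h2]
      have := abs_le.mp h1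
      nlinarith [this.1]
  have hucoe : ((x + (c:ℂ) • 1 : S) : H →L[ℂ] H) = T + (c : ℂ) • 1 := by push_cast; rfl
  have hQu : 0 ≤ ((Q (x + (c:ℂ) • 1) : S) : H →L[ℂ] H) := hpos' _ (by rw [hucoe]; exact hu)
  have hQusa : IsSelfAdjoint ((Q (x + (c:ℂ) • 1) : S) : H →L[ℂ] H) := .of_nonneg hQu
  have hQusa' : star (Q (x + (c:ℂ) • 1)) = Q (x + (c:ℂ) • 1) := by
    apply Subtype.ext
    simpa using hQusa.star_eq
  have hexp : Q (x + (c:ℂ) • 1) = Q x + (c:ℂ) • 1 := by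
    rw [map_add, LinearMap.map_smul, hunital]
  rw [hexp] at hQusa'
  rw [star_add, star_smul, star_one] at hQusa'
  have : star (Q x) + (starRingEnd ℂ) (c:ℂ) • 1 = Q x + (c:ℂ) • 1 := hQusa'
  rw [Complex.conj_ofReal] at this
  exact add_right_cancel this

/-- A unital positive map on a star subalgebra commutes with star. -/
lemma lemQstar (hunital : Q 1 = 1)
    (hpos' : ∀ x : S, 0 ≤ (x : H →L[ℂ] H) → 0 ≤ ((Q x : S) : H →L[ℂ] H)) :
    ∀ x : S, Q (star x) = star (Q x) := by
  intro x
  set r : S := (2:ℂ)⁻¹ • (x + star x) with hr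
  set s : S := (Complex.I * (2:ℂ)⁻¹) • (star x - x) with hs
  have hrsa : star r = r := by
    rw [hr, star_smul, star_add, star_star, add_comm]
    congr 1
    simp
  have hssa : star s = s := by
    rw [hs, star_smul, star_sub, star_star]
    have h1 : star (Complex.I * (2:ℂ)⁻¹) = -(Complex.I * (2:ℂ)⁻¹) := by
      simp [Complex.ext_iff]
    rw [h1, neg_smul, ← smul_neg, neg_sub]
  have hI : Complex.I * (Complex.I * (2:ℂ)⁻¹) = -(2:ℂ)⁻¹ := by
    rw [← mul_assoc, Complex.I_mul_I]; ring
  have hxr : x = r + Complex.I • s := by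
    rw [hr, hs, smul_smul, hI]
    simp only [smul_add, smul_sub, neg_smul]
    module
  have hxstar : star x = r - Complex.I • s := by
    rw [hr, hs, smul_smul, hI]
    simp only [smul_add, smul_sub, neg_smul]
    module
  have hQr := lemQsa S Q hunital hpos' r hrsa
  have hQs := lemQsa S Q hunital hpos' s hssa
  have e1 : Q (star x) = Q r - Complex.I • Q s := by
    rw [hxstar]
    simp only [map_sub, LinearMap.map_smul]
  have e2 : Q x = Q r + Complex.I • Q s := by
    rw [hxr]
    simp only [map_add, LinearMap.map_smul]
  rw [e1, e2, star_add, star_smul, hQr, hQs]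
  have h2 : star Complex.I = -Complex.I := by simp
  rw [h2, neg_smul, ← sub_eq_add_neg]

end Core
section Core2
set_option maxHeartbeats 1000000
set_option synthInstance.maxHeartbeats 80000

variable {H : Type*} [NormedAddCommGroup H] [InnerProductSpace ℂ H] [CompleteSpace H]
variable (S : StarSubalgebra ℂ (H →L[ℂ] H)) (Q : S →ₗ[ℂ] S)

open Polynomial Finset in
/-- Kadison–Schwarz inequality for elements `0 ≤ b ≤ 1`, via Bernstein polynomials. -/
lemma lemKb (hunital : Q 1 = 1)
    (hpos' : ∀ x : S, 0 ≤ (x : H →L[ℂ] H) → 0 ≤ ((Q x : S) : H →L[ℂ] H)) :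
    ∀ b : S, 0 ≤ (b : H →L[ℂ] H) → (b : H →L[ℂ] H) ≤ 1 →
      ((Q b : S) : H →L[ℂ] H) * ((Q b : S) : H →L[ℂ] H) ≤ ((Q (b*b) : S) : H →L[ℂ] H) := by
  intro b hb0 hb1
  set T : H →L[ℂ] H := (b : H →L[ℂ] H) with hTdef
  set Y : H →L[ℂ] H := ((Q b : S) : H →L[ℂ] H) with hYdef
  set Z : H →L[ℂ] H := ((Q (b*b) : S) : H →L[ℂ] H) with hZdef
  have hbsa : star b = b := Subtype.ext (IsSelfAdjoint.of_nonneg hb0)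
  have hYsa : IsSelfAdjoint Y := .of_nonneg (hpos' b hb0)
  have hYYsa : IsSelfAdjoint (Y * Y) := by
    rw [IsSelfAdjoint, star_mul, hYsa.star_eq]
  have hZsa : IsSelfAdjoint Z := by
    have hbb : star (b*b) = b*b := by rw [star_mul, hbsa]
    have h2 := lemQsa S Q hunital hpos' (b*b) hbb
    exact congrArg Subtype.val h2
  refine aux_le_of_forall_inner hYYsa hZsa fun ξ => ?_
  set w : ℝ := re ⟪(Y*Y) ξ, ξ⟫_ℂ with hw
  set p : ℝ := re ⟪Z ξ, ξ⟫_ℂ with hp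
  set r : ℝ := re ⟪Y ξ, ξ⟫_ℂ with hrr
  show w ≤ p
  have step : ∀ n : ℕ, 1 ≤ n → (n:ℝ)^2 * w ≤ ((n*(n-1) : ℕ) : ℝ) * p + (n:ℝ) * r := by
    intro n hn
    set e : ℕ → S := fun ν => aeval b (bernsteinPolynomial ℂ n ν) with he_def
    set q : ℕ → (H →L[ℂ] H) := fun ν => ((Q (e ν) : S) : H →L[ℂ] H) with hq_def
    have he : ∀ ν, ((e ν : S) : H →L[ℂ] H)
        = (n.choose ν : H →L[ℂ] H) * (T ^ ν * (1 - T) ^ (n - ν)) := by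
      intro ν
      rw [he_def]
      simp only [bernsteinPolynomial]
      simp only [map_mul, map_pow, map_sub, map_one, Polynomial.aeval_X, map_natCast]
      push_cast [hTdef]
      rw [mul_assoc]
    have hq0 : ∀ ν ∈ Finset.range (n+1), 0 ≤ q ν := by
      intro ν _
      refine hpos' _ ?_
      rw [he ν, ← nsmul_eq_mul]
      exact nsmul_nonneg (aux_pow_mul_nonneg T hb0 hb1 ν (n - ν)) _
    -- the three Bernstein identities, at the level of `S`
    have hsumS : (∑ ν ∈ Finset.range (n+1), e ν) = 1 := by
      rw [he_def, ← map_sum, bernsteinPolynomial.sum, map_one]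
    have hlinS : (∑ ν ∈ Finset.range (n+1), ν • e ν) = n • b := by
      rw [he_def]
      have : (∑ ν ∈ Finset.range (n+1), ν • aeval b (bernsteinPolynomial ℂ n ν))
          = aeval b (∑ ν ∈ Finset.range (n+1), ν • bernsteinPolynomial ℂ n ν) := by
        rw [map_sum]
        exact Finset.sum_congr rfl fun ν _ => (map_nsmul (aeval b) _ _).symm
      rw [this, bernsteinPolynomial.sum_smul, map_nsmul, Polynomial.aeval_X]
    have hquadS : (∑ ν ∈ Finset.range (n+1), (ν * (ν-1)) • e ν) = (n*(n-1)) • (b * b) := by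
      rw [he_def]
      have : (∑ ν ∈ Finset.range (n+1), (ν * (ν-1)) • aeval b (bernsteinPolynomial ℂ n ν))
          = aeval b (∑ ν ∈ Finset.range (n+1), (ν * (ν-1)) • bernsteinPolynomial ℂ n ν) := by
        rw [map_sum]
        exact Finset.sum_congr rfl fun ν _ => (map_nsmul (aeval b) _ _).symm
      rw [this, bernsteinPolynomial.sum_mul_smul, map_nsmul, map_pow, Polynomial.aeval_X, sq]
    -- transfer to `B`-level sums of `q`
    have hqsum : (∑ ν ∈ Finset.range (n+1), q ν) = 1 := by
      have h1 : (∑ ν ∈ Finset.range (n+1), Q (e ν)) = 1 := by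
        rw [← map_sum, hsumS, hunital]
      calc (∑ ν ∈ Finset.range (n+1), q ν)
          = (((∑ ν ∈ Finset.range (n+1), Q (e ν) : S)) : H →L[ℂ] H) := by push_cast; rfl
        _ = 1 := by rw [h1]; push_cast; ring
    have hlin : (∑ ν ∈ Finset.range (n+1), (ν:ℝ) • q ν) = (n:ℝ) • Y := by
      have h1 : (∑ ν ∈ Finset.range (n+1), ν • Q (e ν)) = n • Q b := by
        have : (∑ ν ∈ Finset.range (n+1), ν • Q (e ν))
            = Q (∑ ν ∈ Finset.range (n+1), ν • e ν) := by
          rw [map_sum]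
          exact Finset.sum_congr rfl fun ν _ => (map_nsmul Q _ _).symm
        rw [this, hlinS, map_nsmul]
      calc (∑ ν ∈ Finset.range (n+1), (ν:ℝ) • q ν)
          = ∑ ν ∈ Finset.range (n+1), ν • q ν := by
            exact Finset.sum_congr rfl fun ν _ => Nat.cast_smul_eq_nsmul ℝ ν (q ν)
        _ = (((∑ ν ∈ Finset.range (n+1), ν • Q (e ν) : S)) : H →L[ℂ] H) := by push_cast; rfl
        _ = ((((n • Q b : S))) : H →L[ℂ] H) := by rw [h1]
        _ = (n:ℝ) • Y := by
            push_cast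
            rw [Nat.cast_smul_eq_nsmul ℝ]
    have hquad : (∑ ν ∈ Finset.range (n+1), ((ν:ℝ))^2 • q ν)
        = ((n*(n-1) : ℕ) : ℝ) • Z + (n:ℝ) • Y := by
      have hnat : ∀ ν : ℕ, ((ν:ℝ))^2 = ((ν * (ν-1) : ℕ) : ℝ) + (ν:ℝ) := by
        intro ν
        cases ν with
        | zero => simp
        | succ k => push_cast [Nat.succ_sub_one]; ring
      have h1 : (∑ ν ∈ Finset.range (n+1), (ν * (ν-1)) • Q (e ν)) = (n*(n-1)) • Q (b*b) := by
        have : (∑ ν ∈ Finset.range (n+1), (ν * (ν-1)) • Q (e ν))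
            = Q (∑ ν ∈ Finset.range (n+1), (ν * (ν-1)) • e ν) := by
          rw [map_sum]
          exact Finset.sum_congr rfl fun ν _ => (map_nsmul Q _ _).symm
        rw [this, hquadS, map_nsmul]
      calc (∑ ν ∈ Finset.range (n+1), ((ν:ℝ))^2 • q ν)
          = ∑ ν ∈ Finset.range (n+1), (((ν * (ν-1) : ℕ) : ℝ) • q ν + (ν:ℝ) • q ν) := by
            refine Finset.sum_congr rfl fun ν _ => ?_
            rw [← add_smul, ← hnat ν]
        _ = (∑ ν ∈ Finset.range (n+1), ((ν * (ν-1) : ℕ) : ℝ) • q ν)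
            + ∑ ν ∈ Finset.range (n+1), (ν:ℝ) • q ν := Finset.sum_add_distrib
        _ = ((n*(n-1) : ℕ) : ℝ) • Z + (n:ℝ) • Y := by
            rw [hlin]
            congr 1
            calc (∑ ν ∈ Finset.range (n+1), ((ν * (ν-1) : ℕ) : ℝ) • q ν)
                = ∑ ν ∈ Finset.range (n+1), (ν * (ν-1)) • q ν := by
                  exact Finset.sum_congr rfl fun ν _ => Nat.cast_smul_eq_nsmul ℝ _ _
              _ = (((∑ ν ∈ Finset.range (n+1), (ν * (ν-1)) • Q (e ν) : S)) : H →L[ℂ] H) := by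
                  push_cast; rfl
              _ = ((((n*(n-1)) • Q (b*b) : S)) : H →L[ℂ] H) := by rw [h1]
              _ = ((n*(n-1) : ℕ) : ℝ) • Z := by
                  rw [Nat.cast_smul_eq_nsmul ℝ]
                  push_cast
                  rfl
    have hineq := aux_sum_sq_le (n+1) q (fun ν => (ν:ℝ)) hq0 hqsum
    rw [hlin, hquad] at hineq
    have h2 := aux_inner_le hineq ξ
    have hL : re ⟪(((n:ℝ) • Y) * ((n:ℝ) • Y)) ξ, ξ⟫_ℂ = (n:ℝ)^2 * w := by
      rw [smul_mul_smul_comm, aux_re_smulR, hw]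
      ring
    have hR : re ⟪((((n*(n-1) : ℕ) : ℝ) • Z + (n:ℝ) • Y)) ξ, ξ⟫_ℂ
        = ((n*(n-1) : ℕ) : ℝ) * p + (n:ℝ) * r := by
      rw [aux_re_add, aux_re_smulR, aux_re_smulR, hp, hrr]
    rw [hL, hR] at h2
    exact h2
  -- limit `n → ∞`
  refine le_of_forall_pos_le_add fun ε hε => ?_
  obtain ⟨n, hn⟩ := exists_nat_gt (max 1 (|r - p| / ε))
  have hn1 : (1:ℝ) < n := lt_of_le_of_lt (le_max_left _ _) hn
  have hn1' : 1 ≤ n := by exact_mod_cast hn1.le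
  have hs := step n hn1'
  have hcast : ((n*(n-1):ℕ):ℝ) = (n:ℝ) * ((n:ℝ) - 1) := by
    push_cast [Nat.cast_sub hn1']
    ring
  rw [hcast] at hs
  have hn0 : (0:ℝ) < n := by linarith
  have habs : |r - p| < ε * n := by
    have h3 := lt_of_le_of_lt (le_max_right 1 (|r - p| / ε)) hn
    rw [div_lt_iff₀ hε] at h3
    linarith
  have e1 : (n:ℝ) * (r - p) ≤ (n:ℝ) * |r - p| :=
    mul_le_mul_of_nonneg_left (le_abs_self _) hn0.le
  have e2 : (n:ℝ) * |r - p| ≤ (n:ℝ) * (ε * n) :=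
    mul_le_mul_of_nonneg_left habs.le hn0.le
  have final : (n:ℝ)^2 * w ≤ (n:ℝ)^2 * (p + ε) := by nlinarith
  exact (mul_le_mul_iff_right₀ (by positivity)).mp final

end Core2
section Core3
set_option maxHeartbeats 1000000
set_option synthInstance.maxHeartbeats 80000
set_option linter.unusedSectionVars false

variable {H : Type*} [NormedAddCommGroup H] [InnerProductSpace ℂ H] [CompleteSpace H]
variable (S : StarSubalgebra ℂ (H →L[ℂ] H)) (Q : S →ₗ[ℂ] S)

/-- Kadison–Schwarz for all selfadjoint elements. -/
lemma lemK (hunital : Q 1 = 1)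
    (hpos' : ∀ x : S, 0 ≤ (x : H →L[ℂ] H) → 0 ≤ ((Q x : S) : H →L[ℂ] H)) :
    ∀ a : S, star a = a →
      ((Q a : S) : H →L[ℂ] H) * ((Q a : S) : H →L[ℂ] H) ≤ ((Q (a*a) : S) : H →L[ℂ] H) := by
  intro a ha
  set T : H →L[ℂ] H := (a : H →L[ℂ] H) with hTdef
  have hTsa : IsSelfAdjoint T := by
    have := congrArg (fun z : S => (z : H →L[ℂ] H)) ha
    exact (show star (a : H →L[ℂ] H) = a by simpa using this)
  set c : ℝ := ‖T‖ + 1 with hc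
  have hc0 : (0:ℝ) < c := by positivity
  set g : ℝ := (2*c)⁻¹ with hg
  have hg0 : (0:ℝ) < g := by positivity
  set b : S := (g:ℂ) • (a + (c:ℂ) • 1) with hb
  have hbcoe : (b : H →L[ℂ] H) = (g:ℂ) • (T + (c:ℂ) • 1) := by
    rw [hb]; push_cast [hTdef]; ring_nf
  have hbsa : star (T + (c:ℂ) • 1) = T + (c:ℂ) • 1 := by
    rw [star_add, hTsa.star_eq, star_smul, star_one]
    norm_num
  have hone : ∀ ξ : H, re ⟪(1 : H →L[ℂ] H) ξ, ξ⟫_ℂ = ‖ξ‖ ^ 2 := by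
    intro ξ; simp [ContinuousLinearMap.one_apply, inner_self_eq_norm_sq]; norm_cast
  have hTbound : ∀ ξ : H, |re ⟪T ξ, ξ⟫_ℂ| ≤ (c - 1) * ‖ξ‖ ^ 2 := by
    intro ξ
    have := aux_abs_re_inner_le T ξ
    simpa [hc] using this
  have hb0 : 0 ≤ (b : H →L[ℂ] H) := by
    rw [hbcoe]
    refine aux_isPositive_of_forall ?_ fun ξ => ?_
    · show star _ = _
      rw [star_smul, hbsa]
      norm_num
    · rw [aux_re_smul, aux_re_add, aux_re_smul, hone]
      have h1 := abs_le.mp (hTbound ξ)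
      have h2 : (0:ℝ) ≤ ‖ξ‖ ^ 2 := by positivity
      nlinarith [h1.1]
  have hb1 : (b : H →L[ℂ] H) ≤ 1 := by
    rw [hbcoe]
    refine aux_le_of_forall_inner ?_ (IsSelfAdjoint.one _) fun ξ => ?_
    · show star _ = _
      rw [star_smul, hbsa]
      norm_num
    · rw [aux_re_smul, aux_re_add, aux_re_smul, hone]
      have h1 := abs_le.mp (hTbound ξ)
      have h2 : (0:ℝ) ≤ ‖ξ‖ ^ 2 := by positivity
      have h3 : (2*c) * g = 1 := mul_inv_cancel₀ (by positivity)
      nlinarith [h1.2]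
  have hKb' := lemKb S Q hunital hpos' b hb0 hb1
  set u : H →L[ℂ] H := ((Q a : S) : H →L[ℂ] H) with hu
  set z : H →L[ℂ] H := ((Q (a*a) : S) : H →L[ℂ] H) with hz
  -- identities
  have hQb : ((Q b : S) : H →L[ℂ] H) = (g:ℂ) • (u + (c:ℂ) • 1) := by
    have : Q b = (g:ℂ) • (Q a + (c:ℂ) • 1) := by
      rw [hb, LinearMap.map_smul, map_add, LinearMap.map_smul, hunital]
    rw [this]
    push_cast [hu]
    module
  have hbb : b * b = ((g:ℂ)*(g:ℂ)) • (a*a + ((2*c:ℝ):ℂ) • a + (((c*c:ℝ)):ℂ) • (1:S)) := by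
    rw [hb, smul_mul_smul_comm]
    congr 1
    simp only [mul_add, add_mul, smul_mul_assoc, mul_smul_comm, mul_one, one_mul, smul_smul]
    push_cast
    module
  have hQbb : ((Q (b*b) : S) : H →L[ℂ] H)
      = ((g:ℂ)*(g:ℂ)) • (z + ((2*c:ℝ):ℂ) • u + (((c*c:ℝ)):ℂ) • (1:H →L[ℂ] H)) := by
    have : Q (b*b)
        = ((g:ℂ)*(g:ℂ)) • (Q (a*a) + ((2*c:ℝ):ℂ) • Q a + (((c*c:ℝ)):ℂ) • (1:S)) := by
      rw [hbb, LinearMap.map_smul, map_add, map_add, LinearMap.map_smul, LinearMap.map_smul,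
        hunital]
    rw [this]
    push_cast [hu, hz]
    module
  have h1 : 0 ≤ ((Q (b*b) : S) : H →L[ℂ] H)
      - ((Q b : S) : H →L[ℂ] H) * ((Q b : S) : H →L[ℂ] H) := sub_nonneg.mpr hKb'
  have key : ((Q (b*b) : S) : H →L[ℂ] H)
      - ((Q b : S) : H →L[ℂ] H) * ((Q b : S) : H →L[ℂ] H)
      = ((g*g : ℝ) : ℂ) • (z - u * u) := by
    rw [hQb, hQbb, smul_mul_smul_comm]
    simp only [mul_add, add_mul, smul_mul_assoc, mul_smul_comm, mul_one, one_mul, smul_smul]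
    push_cast
    module
  rw [key] at h1
  have h2 := aux_smul_nonneg ((g*g)⁻¹) (by positivity) h1
  rw [smul_smul, ← Complex.ofReal_mul, inv_mul_cancel₀ (by positivity), Complex.ofReal_one,
    one_smul] at h2
  exact sub_nonneg.mp h2

/-- Squares of selfadjoint fixed points are fixed. -/
lemma lemSq (hunital : Q 1 = 1)
    (hpos' : ∀ x : S, 0 ≤ (x : H →L[ℂ] H) → 0 ≤ ((Q x : S) : H →L[ℂ] H))
    (hfaithful' : ∀ x : S, 0 ≤ (x : H →L[ℂ] H) → Q x = 0 → x = 0)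
    (hproj : ∀ x, Q (Q x) = Q x) :
    ∀ a : S, star a = a → Q a = a → Q (a*a) = a*a := by
  intro a ha hQa
  have h := lemK S Q hunital hpos' a ha
  rw [hQa] at h
  have hz0 : 0 ≤ ((Q (a*a) - a*a : S) : H →L[ℂ] H) := by
    push_cast
    exact sub_nonneg.mpr h
  have hQz : Q (Q (a*a) - a*a) = 0 := by rw [map_sub, hproj, sub_self]
  have h0 := hfaithful' _ hz0 hQz
  exact sub_eq_zero.mp h0

/-- The key Jordan identity for selfadjoint elements. -/
lemma lemJsa (hunital : Q 1 = 1)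
    (hpos' : ∀ x : S, 0 ≤ (x : H →L[ℂ] H) → 0 ≤ ((Q x : S) : H →L[ℂ] H))
    (hfaithful' : ∀ x : S, 0 ≤ (x : H →L[ℂ] H) → Q x = 0 → x = 0)
    (hproj : ∀ x, Q (Q x) = Q x) :
    ∀ a : S, star a = a → Q a = a → ∀ x : S, star x = x →
      Q (x*a + a*x) = Q x * a + a * Q x := by
  intro a ha hQa x hx
  set D : S := Q (x*a + a*x) - (Q x * a + a * Q x) with hD
  have hQx_sa : star (Q x) = Q x := lemQsa S Q hunital hpos' x hx
  have hsum_sa : star (x*a + a*x) = x*a + a*x := by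
    rw [star_add, star_mul, star_mul, ha, hx, add_comm]
  have hDsa : star D = D := by
    rw [hD, star_sub, lemQsa S Q hunital hpos' _ hsum_sa, star_add, star_mul, star_mul,
      hQx_sa, ha, add_comm (a * Q x)]
  have key : ∀ t : ℝ, 0 ≤ ((Q (x*x) - Q x * Q x : S) : H →L[ℂ] H) + (t:ℂ) • (D : H →L[ℂ] H) := by
    intro t
    set y : S := x + (t:ℂ) • a with hy
    have hysa : star y = y := by
      rw [hy, star_add, hx, star_smul, ha]
      norm_num
    have hky := lemK S Q hunital hpos' y hysa
    have hyy : y * y = x*x + (t:ℂ) • (x*a + a*x) + ((t:ℂ)*(t:ℂ)) • (a*a) := by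
      rw [hy]
      simp only [mul_add, add_mul, smul_mul_assoc, mul_smul_comm, smul_smul, smul_add]
      module
    have hQyy : Q (y*y) = Q (x*x) + (t:ℂ) • Q (x*a + a*x) + ((t:ℂ)*(t:ℂ)) • (a*a) := by
      rw [hyy, map_add, map_add, LinearMap.map_smul, LinearMap.map_smul,
        lemSq S Q hunital hpos' hfaithful' hproj a ha hQa]
    have hQy : Q y = Q x + (t:ℂ) • a := by
      rw [hy, map_add, LinearMap.map_smul, hQa]
    have hdiff : ((Q (y*y) : S) : H →L[ℂ] H)
        - ((Q y : S) : H →L[ℂ] H) * ((Q y : S) : H →L[ℂ] H)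
        = ((Q (x*x) - Q x * Q x : S) : H →L[ℂ] H) + (t:ℂ) • (D : H →L[ℂ] H) := by
      rw [hQyy, hQy, hD]
      push_cast
      simp only [mul_add, add_mul, smul_mul_assoc, mul_smul_comm, smul_smul, smul_add, smul_sub]
      module
    have h0 := sub_nonneg.mpr hky
    rw [hdiff] at h0
    exact h0
  have hDcoe_sa : IsSelfAdjoint (D : H →L[ℂ] H) := by
    have := congrArg (fun z : S => (z : H →L[ℂ] H)) hDsa
    exact (show star (D : H →L[ℂ] H) = D by simpa using this)
  have hform : ∀ ξ : H, re ⟪(D : H →L[ℂ] H) ξ, ξ⟫_ℂ = 0 := by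
    intro ξ
    by_contra hne
    set d : ℝ := re ⟪(D : H →L[ℂ] H) ξ, ξ⟫_ℂ with hd
    set cc : ℝ := re ⟪((Q (x*x) - Q x * Q x : S) : H →L[ℂ] H) ξ, ξ⟫_ℂ with hcc
    have h1 := key ((-(cc + 1))/d)
    have h2 : (0:ℝ) ≤ cc + ((-(cc + 1))/d) * d := by
      have h3 := aux_inner_le h1 ξ
      rw [aux_re_add, aux_re_smul] at h3
      simp only [ContinuousLinearMap.zero_apply, inner_zero_left, map_zero] at h3
      exact h3
    rw [div_mul_cancel₀ _ hne] at h2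
    linarith
  have hall : ∀ ξ : H, ⟪(D : H →L[ℂ] H) ξ, ξ⟫_ℂ = 0 := by
    intro ξ
    have hsym := (ContinuousLinearMap.isSelfAdjoint_iff_isSymmetric.mp hDcoe_sa)
    rw [← hsym.coe_reApplyInnerSelf_apply ξ, ContinuousLinearMap.reApplyInnerSelf_apply,
      hform ξ]
    simp
  have hD0 : (D : H →L[ℂ] H) = 0 := by
    have h0 := (inner_map_self_eq_zero (((D : H →L[ℂ] H) : H →ₗ[ℂ] H))).mp (fun ξ => hall ξ)
    ext ξ
    have := congrArg (fun f : H →ₗ[ℂ] H => f ξ) h0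
    simpa using this
  have hD0' : D = 0 := by
    apply Subtype.ext
    simpa using hD0
  rw [hD] at hD0'
  exact sub_eq_zero.mp hD0'

end Core3
section Core4
set_option maxHeartbeats 1000000
set_option synthInstance.maxHeartbeats 80000
set_option linter.unusedSectionVars false

variable {H : Type*} [NormedAddCommGroup H] [InnerProductSpace ℂ H] [CompleteSpace H]
variable (S : StarSubalgebra ℂ (H →L[ℂ] H)) (Q : S →ₗ[ℂ] S)

/-- Selfadjoint decomposition, compatible with `Q`-fixed points. -/
lemma lemSplit (hunital : Q 1 = 1)
    (hpos' : ∀ x : S, 0 ≤ (x : H →L[ℂ] H) → 0 ≤ ((Q x : S) : H →L[ℂ] H)) :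
    ∀ u : S, ∃ u₁ u₂ : S, star u₁ = u₁ ∧ star u₂ = u₂ ∧ u = u₁ + Complex.I • u₂ ∧
      (Q u = u → Q u₁ = u₁ ∧ Q u₂ = u₂) := by
  intro u
  refine ⟨(2:ℂ)⁻¹ • (u + star u), (Complex.I * (2:ℂ)⁻¹) • (star u - u), ?_, ?_, ?_, ?_⟩
  · rw [star_smul, star_add, star_star, add_comm]
    congr 1
    simp
  · rw [star_smul, star_sub, star_star]
    have h1 : star (Complex.I * (2:ℂ)⁻¹) = -(Complex.I * (2:ℂ)⁻¹) := by
      simp [Complex.ext_iff]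
    rw [h1, neg_smul, ← smul_neg, neg_sub]
  · rw [smul_smul]
    have hI : Complex.I * (Complex.I * (2:ℂ)⁻¹) = -(2:ℂ)⁻¹ := by
      rw [← mul_assoc, Complex.I_mul_I]; ring
    rw [hI]
    simp only [smul_add, smul_sub, neg_smul]
    module
  · intro hQu
    have hstar : Q (star u) = star u := by
      rw [lemQstar S Q hunital hpos' u, hQu]
    constructor
    · rw [LinearMap.map_smul, map_add, hQu, hstar]
    · rw [LinearMap.map_smul, map_sub, hQu, hstar]

/-- The Jordan identity, in full bilinear form. -/
lemma lemJ (hunital : Q 1 = 1)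
    (hpos' : ∀ x : S, 0 ≤ (x : H →L[ℂ] H) → 0 ≤ ((Q x : S) : H →L[ℂ] H))
    (hfaithful' : ∀ x : S, 0 ≤ (x : H →L[ℂ] H) → Q x = 0 → x = 0)
    (hproj : ∀ x, Q (Q x) = Q x) :
    ∀ a : S, Q a = a → ∀ x : S, Q (x*a + a*x) = Q x * a + a * Q x := by
  have step1 : ∀ a : S, star a = a → Q a = a → ∀ x : S,
      Q (x*a + a*x) = Q x * a + a * Q x := by
    intro a ha hQa x
    obtain ⟨x₁, x₂, hx₁, hx₂, hxeq, -⟩ := lemSplit S Q hunital hpos' x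
    have e1 : x*a + a*x = (x₁*a + a*x₁) + Complex.I • (x₂*a + a*x₂) := by
      rw [hxeq]
      simp only [add_mul, mul_add, smul_mul_assoc, mul_smul_comm, smul_add]
      abel
    have e2 : Q (x*a + a*x) = Q (x₁*a + a*x₁) + Complex.I • Q (x₂*a + a*x₂) := by
      rw [e1, map_add, LinearMap.map_smul]
    have e3 : Q x = Q x₁ + Complex.I • Q x₂ := by
      rw [hxeq, map_add, LinearMap.map_smul]
    rw [e2, lemJsa S Q hunital hpos' hfaithful' hproj a ha hQa x₁ hx₁,
      lemJsa S Q hunital hpos' hfaithful' hproj a ha hQa x₂ hx₂, e3]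
    simp only [add_mul, mul_add, smul_mul_assoc, mul_smul_comm, smul_add]
    abel
  intro a hQa x
  obtain ⟨a₁, a₂, ha₁, ha₂, haeq, hfix⟩ := lemSplit S Q hunital hpos' a
  obtain ⟨hQ₁, hQ₂⟩ := hfix hQa
  have e1 : x*a + a*x = (x*a₁ + a₁*x) + Complex.I • (x*a₂ + a₂*x) := by
    rw [haeq]
    simp only [add_mul, mul_add, smul_mul_assoc, mul_smul_comm, smul_add]
    abel
  have e2 : Q (x*a + a*x) = Q (x*a₁ + a₁*x) + Complex.I • Q (x*a₂ + a₂*x) := by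
    rw [e1, map_add, LinearMap.map_smul]
  rw [e2, step1 a₁ ha₁ hQ₁ x, step1 a₂ ha₂ hQ₂ x, haeq]
  simp only [add_mul, mul_add, smul_mul_assoc, mul_smul_comm, smul_add]
  abel

end Core4
/-- The weak operator topology on (the underlying star-subalgebra of) a von Neumann
algebra `M` acting on `H`: the topology induced by the maps `x ↦ ⟪x ξ, η⟫`. -/
noncomputable def vonNeumannWOT {H : Type*} [NormedAddCommGroup H] [InnerProductSpace ℂ H]
    [CompleteSpace H] (M : VonNeumannAlgebra H) :
    TopologicalSpace M.toStarSubalgebra :=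
  TopologicalSpace.induced
    (fun x => fun p : H × H => (inner ℂ ((x : H →L[ℂ] H) p.1) p.2 : ℂ)) inferInstance

/-- A WOT-continuous faithful unital positive linear projection `Q` on a von Neumann
algebra `M` is a Jordan conditional expectation, and its range is closed under the star
operation and the Jordan product `x ∘ y = (x*y + y*x)/2`. -/
theorem faithful_unital_positive_projection_jordan
    {H : Type*} [NormedAddCommGroup H] [InnerProductSpace ℂ H] [CompleteSpace H]
    (M : VonNeumannAlgebra H)
    (Q : M.toStarSubalgebra →ₗ[ℂ] M.toStarSubalgebra)
    (hcont : @Continuous _ _ (vonNeumannWOT M) (vonNeumannWOT M) Q)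
    (hunital : Q 1 = 1)
    (hpos : ∀ x : M.toStarSubalgebra,
      ((x : H →L[ℂ] H)).IsPositive → ((Q x : H →L[ℂ] H)).IsPositive)
    (hfaithful : ∀ x : M.toStarSubalgebra,
      ((x : H →L[ℂ] H)).IsPositive → Q x = 0 → x = 0)
    (hproj : ∀ x, Q (Q x) = Q x) :
    (∀ x y : M.toStarSubalgebra,
      Q ((2 : ℂ)⁻¹ • (x * Q y + Q y * x)) = (2 : ℂ)⁻¹ • (Q x * Q y + Q y * Q x)) ∧
    (∀ x ∈ Set.range Q, star x ∈ Set.range Q) ∧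
    (∀ x ∈ Set.range Q, ∀ y ∈ Set.range Q,
      (2 : ℂ)⁻¹ • (x * y + y * x) ∈ Set.range Q) := by
  have hpos' : ∀ x : M.toStarSubalgebra, 0 ≤ (x : H →L[ℂ] H) →
      0 ≤ ((Q x : M.toStarSubalgebra) : H →L[ℂ] H) := fun x hx =>
    (ContinuousLinearMap.nonneg_iff_isPositive _).mpr
      (hpos x ((ContinuousLinearMap.nonneg_iff_isPositive _).mp hx))
  have hfaithful' : ∀ x : M.toStarSubalgebra, 0 ≤ (x : H →L[ℂ] H) → Q x = 0 → x = 0 :=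
    fun x hx h => hfaithful x ((ContinuousLinearMap.nonneg_iff_isPositive _).mp hx) h
  refine ⟨?_, ?_, ?_⟩
  · intro x y
    have h := lemJ M.toStarSubalgebra Q hunital hpos' hfaithful' hproj (Q y) (hproj y) x
    rw [LinearMap.map_smul, h]
  · rintro x ⟨u, rfl⟩
    exact ⟨star u, lemQstar M.toStarSubalgebra Q hunital hpos' u⟩
  · rintro x ⟨u, rfl⟩ y ⟨v, rfl⟩
    have h := lemJ M.toStarSubalgebra Q hunital hpos' hfaithful' hproj (Q v) (hproj v) (Q u)
    rw [hproj u] at h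
    exact ⟨(2:ℂ)⁻¹ • (Q u * Q v + Q v * Q u), by rw [LinearMap.map_smul, h]⟩
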